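/- For every N ∈ ℕ: (a) the trace of K_N equals [N]_q (the image of the HOMFLY dimension relation under evaluation at t = N); (b) ptr₂((id ⊗ K_N) ∘ β_N) = q^N · id_{V_N}; and (c) ptr₂((id ⊗ K_N) ∘ β_N⁻¹) = q^{−N} · id_{V_N} (the images of the positive and negative twist relations under evaluation at t = N). -/

import Mathlib

open scoped TensorProduct

set_option synthInstance.maxHeartbeats 1000000
set_option maxHeartbeats 1000000
noncomputable section

abbrev F : Type := RatFunc ℂ

def q : F := RatFunc.X

abbrev V (N : ℕ) : Type := Fin N → F

def bV (N : ℕ) : Module.Basis (Fin N) F (V N) := Pi.basisFun F (Fin N)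

def e {N : ℕ} (i : Fin N) : V N := bV N i

def bVV (N : ℕ) : Module.Basis (Fin N × Fin N) F (V N ⊗[F] V N) :=
  (bV N).tensorProduct (bV N)

/-- The HOMFLY R-matrix β_N. -/
def β (N : ℕ) : V N ⊗[F] V N →ₗ[F] V N ⊗[F] V N :=
  (bVV N).constr F fun p =>
    if p.1 = p.2 then q • (e p.1 ⊗ₜ[F] e p.1)
    else if p.1 < p.2 then e p.2 ⊗ₜ[F] e p.1
    else e p.2 ⊗ₜ[F] e p.1 + (q - q⁻¹) • (e p.1 ⊗ₜ[F] e p.2)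

/-- Linear inclusion induced by a map of index sets. -/
def emb {a N : ℕ} (f : Fin a → Fin N) : V a →ₗ[F] V N :=
  (bV a).constr F fun i => e (f i)

def ι₁ (m n : ℕ) : Fin m → Fin (m + n) := Fin.castAdd n
def ι₂ (m n : ℕ) : Fin n → Fin (m + n) := Fin.natAdd m

/-- The Levi braiding c_{m,n}. -/
def levi (m n : ℕ) : V (m + n) ⊗[F] V (m + n) →ₗ[F] V (m + n) ⊗[F] V (m + n) :=
  (bVV (m + n)).constr F fun p =>
    if ha : (p.1 : ℕ) < m then
      if hb : (p.2 : ℕ) < m then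
        TensorProduct.map (emb (ι₁ m n)) (emb (ι₁ m n))
          (β m (e ⟨p.1, ha⟩ ⊗ₜ[F] e ⟨p.2, hb⟩))
      else e p.2 ⊗ₜ[F] e p.1
    else
      if hb : (p.2 : ℕ) < m then e p.2 ⊗ₜ[F] e p.1
      else
        TensorProduct.map (emb (ι₂ m n)) (emb (ι₂ m n))
          (β n (e ⟨(p.1 : ℕ) - m, by have := p.1.isLt; omega⟩ ⊗ₜ[F]
                e ⟨(p.2 : ℕ) - m, by have := p.2.isLt; omega⟩))

/-- Partial trace over the second tensor factor. -/
def ptr {N : ℕ} (Φ : V N ⊗[F] V N →ₗ[F] V N ⊗[F] V N) : V N →ₗ[F] V N :=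
  (bV N).constr F fun i =>
    ∑ j : Fin N,
      (TensorProduct.rid F (V N))
        (TensorProduct.map LinearMap.id (LinearMap.proj j) (Φ (e i ⊗ₜ[F] e j)))

/-- Quantum integer [n]_q. -/
def qint (n : ℤ) : F := (q ^ n - q ^ (-n)) / (q - q⁻¹)

/-- The diagonal operator `K_N` with `K_N (e i) = q^(N-1-2i) • e i`. -/
def K (N : ℕ) : V N →ₗ[F] V N :=
  (bV N).constr F fun i => (q ^ ((N : ℤ) - 1 - 2 * (i.val : ℤ))) • e i


/-! ### Auxiliary lemmas -/

lemma q_ne_zero : q ≠ 0 := RatFunc.X_ne_zero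

lemma q_mul_self_ne_one : q * q ≠ 1 := by
  intro h
  have h2 : (Polynomial.X * Polynomial.X : Polynomial ℂ) = 1 := by
    apply IsFractionRing.injective (Polynomial ℂ) F
    simpa [map_mul, RatFunc.algebraMap_X, q] using h
  simpa using congrArg (Polynomial.eval 0) h2

lemma qq_ne : q - q⁻¹ ≠ 0 := by
  intro h
  apply q_mul_self_ne_one
  have hq : q = q⁻¹ := sub_eq_zero.mp h
  nth_rewrite 2 [hq]
  exact mul_inv_cancel₀ q_ne_zero

lemma e_val {N : ℕ} (k j : Fin N) : e k j = if j = k then 1 else 0 := by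
  simp [e, bV, Pi.basisFun_apply, Pi.single_apply]

lemma bVV_apply {N : ℕ} (i j : Fin N) : bVV N (i, j) = e i ⊗ₜ[F] e j :=
  Module.Basis.tensorProduct_apply _ _ i j

lemma β_apply {N : ℕ} (i j : Fin N) :
    β N (e i ⊗ₜ[F] e j) =
      if i = j then q • (e i ⊗ₜ[F] e i)
      else if i < j then e j ⊗ₜ[F] e i
      else e j ⊗ₜ[F] e i + (q - q⁻¹) • (e i ⊗ₜ[F] e j) := by
  rw [← bVV_apply, β, Module.Basis.constr_basis, bVV_apply]

/-- Inverse of the R-matrix. -/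
def βi (N : ℕ) : V N ⊗[F] V N →ₗ[F] V N ⊗[F] V N :=
  (bVV N).constr F fun p =>
    if p.1 = p.2 then q⁻¹ • (e p.1 ⊗ₜ[F] e p.1)
    else if p.2 < p.1 then e p.2 ⊗ₜ[F] e p.1
    else e p.2 ⊗ₜ[F] e p.1 - (q - q⁻¹) • (e p.1 ⊗ₜ[F] e p.2)

lemma βi_apply {N : ℕ} (i j : Fin N) :
    βi N (e i ⊗ₜ[F] e j) =
      if i = j then q⁻¹ • (e i ⊗ₜ[F] e i)
      else if j < i then e j ⊗ₜ[F] e i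
      else e j ⊗ₜ[F] e i - (q - q⁻¹) • (e i ⊗ₜ[F] e j) := by
  rw [← bVV_apply, βi, Module.Basis.constr_basis, bVV_apply]

lemma K_apply {N : ℕ} (i : Fin N) :
    K N (e i) = (q ^ ((N : ℤ) - 1 - 2 * (i.val : ℤ))) • e i := by
  rw [K]; exact (bV N).constr_basis F _ i

lemma ptr_apply {N : ℕ} (Φ : V N ⊗[F] V N →ₗ[F] V N ⊗[F] V N) (i : Fin N) :
    ptr Φ (e i) = ∑ j : Fin N,
      (TensorProduct.rid F (V N))
        (TensorProduct.map LinearMap.id (LinearMap.proj j) (Φ (e i ⊗ₜ[F] e j))) := by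
  rw [ptr]; exact (bV N).constr_basis F _ i

/-- `qf N j = q ^ (N - 2 j)`. -/
def qf (N : ℕ) (j : ℕ) : F := q ^ ((N : ℤ) - 2 * (j : ℤ))

lemma qf_step (N j : ℕ) :
    (q - q⁻¹) * q ^ ((N : ℤ) - 1 - 2 * (j : ℤ)) = qf N j - qf N (j + 1) := by
  rw [mul_comm, qf, qf, mul_sub, ← zpow_add_one₀ q_ne_zero, ← zpow_sub_one₀ q_ne_zero]
  have h1 : (N:ℤ) - 1 - 2*(j:ℤ) + 1 = (N:ℤ) - 2*(j:ℤ) := by ring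
  have h2 : (N:ℤ) - 1 - 2*(j:ℤ) - 1 = (N:ℤ) - 2*((j+1 : ℕ):ℤ) := by push_cast; ring
  rw [h1, h2]

lemma qf_top (N i : ℕ) : q * q ^ ((N:ℤ) - 1 - 2*(i:ℤ)) = qf N i := by
  rw [qf, mul_comm, ← zpow_add_one₀ q_ne_zero]
  congr 1; ring

lemma qf_bot (N i : ℕ) : q⁻¹ * q ^ ((N:ℤ) - 1 - 2*(i:ℤ)) = qf N (i + 1) := by
  rw [qf, mul_comm, ← zpow_sub_one₀ q_ne_zero]
  congr 1; push_cast; ring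

lemma qf_zero (N : ℕ) : qf N 0 = q ^ (N : ℤ) := by
  rw [qf]; norm_num

lemma qf_last (N : ℕ) : qf N N = q ^ (-(N : ℤ)) := by
  rw [qf]; congr 1; ring


/-- Coefficient function for the positive twist. -/
def cpos (N i : ℕ) : ℕ → F := fun j =>
  if j = i then qf N i else if j < i then qf N j - qf N (j + 1) else 0

/-- Coefficient function for the negative twist. -/
def cneg (N i : ℕ) : ℕ → F := fun j =>
  if j = i then qf N (i + 1) else if i < j then -(qf N j - qf N (j + 1)) else 0

lemma cpos_sum (N i : ℕ) (hi : i < N) :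
    ∑ j ∈ Finset.range N, cpos N i j = q ^ (N : ℤ) := by
  rw [Finset.range_eq_Ico,
      ← Finset.sum_Ico_consecutive (cpos N i) (Nat.zero_le i) hi.le,
      Finset.sum_eq_sum_Ico_succ_bot hi (cpos N i)]
  have h1 : ∑ j ∈ Finset.Ico 0 i, cpos N i j = q ^ (N : ℤ) - qf N i := by
    rw [← Finset.range_eq_Ico]
    have h : ∀ j ∈ Finset.range i, cpos N i j = qf N j - qf N (j + 1) := by
      intro j hj
      rw [Finset.mem_range] at hj
      rw [cpos, if_neg (by omega), if_pos hj]
    rw [Finset.sum_congr rfl h, Finset.sum_range_sub' (qf N) i, qf_zero]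
  have h2 : cpos N i i = qf N i := by rw [cpos, if_pos rfl]
  have h3 : ∑ j ∈ Finset.Ico (i + 1) N, cpos N i j = 0 := by
    apply Finset.sum_eq_zero
    intro j hj
    rw [Finset.mem_Ico] at hj
    rw [cpos, if_neg (by omega), if_neg (by omega)]
  rw [h1, h2, h3]
  ring

lemma cneg_sum (N i : ℕ) (hi : i < N) :
    ∑ j ∈ Finset.range N, cneg N i j = q ^ (-(N : ℤ)) := by
  rw [Finset.range_eq_Ico,
      ← Finset.sum_Ico_consecutive (cneg N i) (Nat.zero_le i) hi.le,
      Finset.sum_eq_sum_Ico_succ_bot hi (cneg N i)]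
  have h1 : ∑ j ∈ Finset.Ico 0 i, cneg N i j = 0 := by
    apply Finset.sum_eq_zero
    intro j hj
    rw [Finset.mem_Ico] at hj
    rw [cneg, if_neg (by omega), if_neg (by omega)]
  have h2 : cneg N i i = qf N (i + 1) := by rw [cneg, if_pos rfl]
  have h3 : ∑ j ∈ Finset.Ico (i + 1) N, cneg N i j = -(qf N (i + 1) - qf N N) := by
    have h : ∀ j ∈ Finset.Ico (i + 1) N, cneg N i j = -(qf N j - qf N (j + 1)) := by
      intro j hj
      rw [Finset.mem_Ico] at hj
      rw [cneg, if_neg (by omega), if_pos (by omega)]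
    rw [Finset.sum_congr rfl h, Finset.sum_neg_distrib, Finset.sum_Ico_eq_sub _ (by omega),
        Finset.sum_range_sub' (qf N), Finset.sum_range_sub' (qf N)]
    ring
  rw [h1, h2, h3, qf_last]
  ring

lemma hterm_pos {N : ℕ} (i j : Fin N) :
    (TensorProduct.rid F (V N)) (TensorProduct.map LinearMap.id (LinearMap.proj j)
      ((TensorProduct.map LinearMap.id (K N) ∘ₗ β N) (e i ⊗ₜ[F] e j)))
      = cpos N i j • e i := by
  rcases lt_trichotomy i j with h | h | h
  · have hne : i ≠ j := ne_of_lt h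
    have hne' : j ≠ i := Ne.symm hne
    have h1 : (i : ℕ) < (j : ℕ) := h
    have hc : cpos N (i : ℕ) (j : ℕ) = 0 := by
      rw [cpos, if_neg (by omega), if_neg (by omega)]
    rw [LinearMap.comp_apply, β_apply, if_neg hne, if_pos h, hc]
    simp [K_apply, TensorProduct.tmul_smul, TensorProduct.rid_tmul, e_val, hne']
  · subst h
    have hc : cpos N (i : ℕ) (i : ℕ) = qf N i := by rw [cpos, if_pos rfl]
    rw [LinearMap.comp_apply, β_apply, if_pos rfl, hc, ← qf_top N i]
    simp [K_apply, TensorProduct.tmul_smul, TensorProduct.rid_tmul, e_val, smul_smul]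
  · have hne : i ≠ j := ne_of_gt h
    have hne' : j ≠ i := Ne.symm hne
    have h1 : (j : ℕ) < (i : ℕ) := h
    have hc : cpos N (i : ℕ) (j : ℕ) = (q - q⁻¹) * q ^ ((N : ℤ) - 1 - 2 * ((j : ℕ) : ℤ)) := by
      rw [cpos, if_neg (by omega), if_pos h1, qf_step]
    rw [LinearMap.comp_apply, β_apply, if_neg hne, if_neg (not_lt.mpr h.le), hc]
    simp [K_apply, TensorProduct.tmul_smul, TensorProduct.rid_tmul, e_val, hne', smul_smul,
      mul_comm]

lemma hterm_neg {N : ℕ} (i j : Fin N) :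
    (TensorProduct.rid F (V N)) (TensorProduct.map LinearMap.id (LinearMap.proj j)
      ((TensorProduct.map LinearMap.id (K N) ∘ₗ βi N) (e i ⊗ₜ[F] e j)))
      = cneg N i j • e i := by
  rcases lt_trichotomy i j with h | h | h
  · have hne : i ≠ j := ne_of_lt h
    have hne' : j ≠ i := Ne.symm hne
    have h1 : (i : ℕ) < (j : ℕ) := h
    have hc : cneg N (i : ℕ) (j : ℕ) = -((q - q⁻¹) * q ^ ((N : ℤ) - 1 - 2 * ((j : ℕ) : ℤ))) := by
      rw [cneg, if_neg (by omega), if_pos h1, qf_step]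
    rw [LinearMap.comp_apply, βi_apply, if_neg hne, if_neg (not_lt.mpr h.le), hc]
    simp [K_apply, TensorProduct.tmul_smul, TensorProduct.rid_tmul, e_val, hne', smul_smul,
      mul_comm]
  · subst h
    have hc : cneg N (i : ℕ) (i : ℕ) = qf N ((i : ℕ) + 1) := by rw [cneg, if_pos rfl]
    rw [LinearMap.comp_apply, βi_apply, if_pos rfl, hc, ← qf_bot N i]
    simp [K_apply, TensorProduct.tmul_smul, TensorProduct.rid_tmul, e_val, smul_smul]
  · have hne : i ≠ j := ne_of_gt h
    have hne' : j ≠ i := Ne.symm hne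
    have h1 : (j : ℕ) < (i : ℕ) := h
    have hc : cneg N (i : ℕ) (j : ℕ) = 0 := by
      rw [cneg, if_neg (by omega), if_neg (by omega)]
    rw [LinearMap.comp_apply, βi_apply, if_neg hne, if_pos h, hc]
    simp [K_apply, TensorProduct.tmul_smul, TensorProduct.rid_tmul, e_val, hne']


lemma βi_comp_β (N : ℕ) : βi N ∘ₗ β N = LinearMap.id := by
  apply (bVV N).ext
  rintro ⟨i, j⟩
  rw [LinearMap.comp_apply, LinearMap.id_apply, bVV_apply, β_apply]
  rcases lt_trichotomy i j with h | h | h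
  · have hne : i ≠ j := ne_of_lt h
    rw [if_neg hne, if_pos h, βi_apply, if_neg (Ne.symm hne), if_pos h]
  · subst h
    rw [if_pos rfl, map_smul, βi_apply, if_pos rfl, smul_smul,
        mul_inv_cancel₀ q_ne_zero, one_smul]
  · have hne : i ≠ j := ne_of_gt h
    rw [if_neg hne, if_neg (not_lt.mpr h.le), map_add, map_smul, βi_apply, βi_apply,
        if_neg (Ne.symm hne), if_neg (not_lt.mpr h.le), if_neg hne, if_pos h]
    abel

lemma β_comp_βi (N : ℕ) : β N ∘ₗ βi N = LinearMap.id := by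
  apply (bVV N).ext
  rintro ⟨i, j⟩
  rw [LinearMap.comp_apply, LinearMap.id_apply, bVV_apply, βi_apply]
  rcases lt_trichotomy i j with h | h | h
  · have hne : i ≠ j := ne_of_lt h
    rw [if_neg hne, if_neg (not_lt.mpr h.le), map_sub, map_smul, β_apply, β_apply,
        if_neg (Ne.symm hne), if_neg (not_lt.mpr h.le), if_neg hne, if_pos h]
    abel
  · subst h
    rw [if_pos rfl, map_smul, β_apply, if_pos rfl, smul_smul,
        inv_mul_cancel₀ q_ne_zero, one_smul]
  · have hne : i ≠ j := ne_of_gt h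
    rw [if_neg hne, if_pos h, β_apply, if_neg (Ne.symm hne), if_pos h]

/-- (a) `trace K_N = [N]_q` (dimension relation at `t = N`);
(b) `ptr₂((id ⊗ K_N) ∘ β_N) = q^N • id` (positive twist relation);
(c) `ptr₂((id ⊗ K_N) ∘ β_N⁻¹) = q^(-N) • id` (negative twist relation). -/
theorem homfly_dimension_and_twist (N : ℕ) :
    LinearMap.trace F (V N) (K N) = qint N ∧
    ptr (TensorProduct.map LinearMap.id (K N) ∘ₗ β N)
      = (q ^ (N : ℤ)) • (LinearMap.id : V N →ₗ[F] V N) ∧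
    ∃ βinv : V N ⊗[F] V N →ₗ[F] V N ⊗[F] V N,
      βinv ∘ₗ β N = LinearMap.id ∧ β N ∘ₗ βinv = LinearMap.id ∧
      ptr (TensorProduct.map LinearMap.id (K N) ∘ₗ βinv)
        = (q ^ (-(N : ℤ))) • (LinearMap.id : V N →ₗ[F] V N) := by
  refine ⟨?_, ?_, βi N, βi_comp_β N, β_comp_βi N, ?_⟩
  · -- (a) trace
    rw [LinearMap.trace_eq_matrix_trace F (bV N), Matrix.trace]
    have hdiag : ∀ i : Fin N,
        ((LinearMap.toMatrix (bV N) (bV N)) (K N)).diag i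
          = q ^ ((N : ℤ) - 1 - 2 * ((i : ℕ) : ℤ)) := by
      intro i
      rw [Matrix.diag, LinearMap.toMatrix_apply, show (bV N) i = e i from rfl, K_apply]
      simp [bV, Pi.basisFun_repr, e_val]
    rw [Finset.sum_congr rfl fun i _ => hdiag i,
        Fin.sum_univ_eq_sum_range (fun j => q ^ ((N : ℤ) - 1 - 2 * (j : ℤ))) N,
        qint, eq_div_iff qq_ne, Finset.sum_mul]
    have h : ∀ j ∈ Finset.range N,
        q ^ ((N : ℤ) - 1 - 2 * (j : ℤ)) * (q - q⁻¹) = qf N j - qf N (j + 1) := by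
      intro j _
      rw [mul_comm, qf_step]
    rw [Finset.sum_congr rfl h, Finset.sum_range_sub' (qf N) N, qf_zero, qf_last]
  · -- (b) positive twist
    apply (bV N).ext
    intro i
    rw [show (bV N) i = e i from rfl, ptr_apply,
        Finset.sum_congr rfl fun j _ => hterm_pos i j,
        Fin.sum_univ_eq_sum_range (fun j => cpos N i j • e i) N, ← Finset.sum_smul,
        cpos_sum N i i.isLt]
    rfl
  · -- (c) negative twist
    apply (bV N).ext
    intro i
    rw [show (bV N) i = e i from rfl, ptr_apply,
        Finset.sum_congr rfl fun j _ => hterm_neg i j,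
        Fin.sum_univ_eq_sum_range (fun j => cneg N i j • e i) N, ← Finset.sum_smul,
        cneg_sum N i i.isLt]
    rfl


end
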